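/- Let n, m₁, m₂ be positive integers with n even, and let A ∈ ℂ^{n×m₁} and B ∈ ℂ^{n×m₂} be matrices such that there exists a row index t for which row t of A and row t of B are both zero, and such that rank(A) ≥ n/2. Then the image of the column span of B under the orthogonal projection of ℂⁿ onto the orthogonal complement of the column span of A has dimension at most n/2 − 1; in particular it is strictly less than n/2. (This is the deterministic core of Lemma 2 of the paper: if an interfering transmitter and the desired transmitter of a receiver share a common silent slot while the interference already occupies an (n/2)-dimensional subspace, the receiver cannot recover n/2 dimensions of its desired signal.) -/

import Mathlib

/-- The column span of an `n × m` complex matrix, viewed as a subspace of the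
standard inner product space `ℂⁿ`. -/
noncomputable def colspanE (n m : ℕ) (A : Matrix (Fin n) (Fin m) ℂ) :
    Submodule ℂ (EuclideanSpace ℂ (Fin n)) :=
  Submodule.span ℂ
    (Set.range fun c : Fin m => (WithLp.equiv 2 (Fin n → ℂ)).symm (fun i => A i c))

/-- The dimension of the column span equals the rank of the matrix. -/
theorem finrank_colspanE (n m : ℕ) (A : Matrix (Fin n) (Fin m) ℂ) :
    Module.finrank ℂ (colspanE n m A) = A.rank := by
  have : colspanE n m A =
      (Submodule.span ℂ (Set.range A.col)).map
        (WithLp.linearEquiv 2 ℂ (Fin n → ℂ)).symm.toLinearMap := by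
    rw [Submodule.map_span, ← Set.range_comp]
    rfl
  rw [this, LinearEquiv.finrank_map_eq, Matrix.rank, Matrix.range_mulVecLin]

/-- Deterministic core of Lemma 2: if `A` and `B` share a common zero row and
`rank A ≥ n/2`, then the projection of the column span of `B` onto the
orthogonal complement of the column span of `A` has dimension at most
`n/2 - 1`, in particular strictly less than `n/2`. -/
theorem stmt_7 (n m₁ m₂ : ℕ) (hn : 0 < n) (hne : Even n)
    (hm₁ : 0 < m₁) (hm₂ : 0 < m₂)
    (A : Matrix (Fin n) (Fin m₁) ℂ) (B : Matrix (Fin n) (Fin m₂) ℂ)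
    (hzero : ∃ t : Fin n, (∀ c, A t c = 0) ∧ (∀ c, B t c = 0))
    (hrA : n / 2 ≤ A.rank) :
    Module.finrank ℂ
        ↥((colspanE n m₂ B).map (Submodule.orthogonalProjectionOnto (colspanE n m₁ A)ᗮ).toLinearMap)
        ≤ n / 2 - 1
    ∧ Module.finrank ℂ
        ↥((colspanE n m₂ B).map (Submodule.orthogonalProjectionOnto (colspanE n m₁ A)ᗮ).toLinearMap)
        < n / 2 := by
  obtain ⟨t, hAt, hBt⟩ := hzero
  set U := colspanE n m₁ A with hU
  set S := (colspanE n m₂ B).map (Submodule.orthogonalProjectionOnto Uᗮ).toLinearMap with hS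
  -- evaluation at t, restricted to W
  let φ : ↥Uᗮ →ₗ[ℂ] ℂ := (EuclideanSpace.proj t).toLinearMap ∘ₗ Uᗮ.subtype
  -- columns of A and of B vanish at t
  have hUker : U ≤ LinearMap.ker ((EuclideanSpace.proj t : EuclideanSpace ℂ (Fin n) →L[ℂ] ℂ).toLinearMap) := by
    rw [hU, colspanE, Submodule.span_le]
    rintro x ⟨c, rfl⟩
    simp [hAt c]
  have hBker : colspanE n m₂ B ≤ LinearMap.ker ((EuclideanSpace.proj t : EuclideanSpace ℂ (Fin n) →L[ℂ] ℂ).toLinearMap) := by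
    rw [colspanE, Submodule.span_le]
    rintro x ⟨c, rfl⟩
    simp [hBt c]
  -- the image lies in ker φ
  have hSker : S ≤ LinearMap.ker φ := by
    rintro y ⟨b, hb, rfl⟩
    have hb0 : b t = 0 := hBker hb
    have hdec : ((Submodule.orthogonalProjectionOnto Uᗮ b : EuclideanSpace ℂ (Fin n))) =
        b - (Submodule.orthogonalProjectionOnto U b : EuclideanSpace ℂ (Fin n)) := by
      have := U.starProjection_add_starProjection_orthogonal b
      rw [Submodule.starProjection_apply, Submodule.starProjection_apply] at this
      linear_combination (norm := module) this
    have hproj0 : ((Submodule.orthogonalProjectionOnto U b : EuclideanSpace ℂ (Fin n))) t = 0 :=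
      hUker (Submodule.orthogonalProjectionOnto U b).2
    simp only [LinearMap.mem_ker, φ, LinearMap.comp_apply, Submodule.subtype_apply]
    show (EuclideanSpace.proj t) ((Submodule.orthogonalProjectionOnto Uᗮ b : EuclideanSpace ℂ (Fin n))) = 0
    rw [hdec]
    simpa [hb0] using hproj0
  -- e_t ∈ Uᗮ with φ e_t ≠ 0, so ker φ is proper in W
  have het : EuclideanSpace.single t (1 : ℂ) ∈ Uᗮ := by
    rw [Submodule.mem_orthogonal]
    intro u hu
    have : u t = 0 := hUker hu
    simp [EuclideanSpace.inner_single_right, this]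
  have hker_ne : LinearMap.ker φ ≠ ⊤ := by
    intro h
    have : φ ⟨_, het⟩ = 0 := by rw [← LinearMap.mem_ker, h]; trivial
    simp [φ, EuclideanSpace.single_apply] at this
  -- dimension counting
  have h1 : Module.finrank ℂ S ≤ Module.finrank ℂ (LinearMap.ker φ) :=
    Submodule.finrank_mono hSker
  have h2 : Module.finrank ℂ (LinearMap.ker φ) < Module.finrank ℂ Uᗮ :=
    Submodule.finrank_lt hker_ne
  have h3 : Module.finrank ℂ U + Module.finrank ℂ Uᗮ = n := by
    rw [U.finrank_add_finrank_orthogonal, finrank_euclideanSpace_fin]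
  have h4 : n / 2 ≤ Module.finrank ℂ U := by
    rw [finrank_colspanE]; exact hrA
  obtain ⟨k, hk⟩ := hne
  have h5 : Module.finrank ℂ S < Module.finrank ℂ Uᗮ := lt_of_le_of_lt h1 h2
  have hSlt : Module.finrank ℂ S < n / 2 := by omega
  exact ⟨by omega, hSlt⟩
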